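/- Let X = (x₀,…,x_N) be a finite sequence of integers, and let Λ(X) denote the set of integer polynomials P(x) = α₀ + α₁ x + … + α_d x^d of degree d ≤ N such that ∑_{j=0}^{d} α_j x_{j+j₀} = 0 for all j₀ = 0,…,N−d. If P₁, P₂ ∈ Λ(X) and deg(P₁) + deg(P₂) ≤ N, then gcd(P₁, P₂) ∈ Λ(X). -/

import Mathlib

open Finset Polynomial

/-- `P ∈ Λ(x₀, …, x_N)`: `P` is an integer polynomial of degree `d ≤ N` whose coefficient
sequence gives a linear recurrence satisfied by `x₀, …, x_N`, i.e.
`∑_{j=0}^{d} (coeff P j) * x_{j+j₀} = 0` for all `j₀ = 0, …, N - d`. -/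
def memLambda (N : ℕ) (x : ℕ → ℤ) (P : Polynomial ℤ) : Prop :=
  P.natDegree ≤ N ∧
    ∀ j₀ : ℕ, j₀ + P.natDegree ≤ N →
      ∑ j ∈ range (P.natDegree + 1), P.coeff j * x (j + j₀) = 0

/-- The shift operator on sequences. -/
noncomputable def shiftL : (ℕ → ℚ) →ₗ[ℚ] (ℕ → ℚ) where
  toFun y := fun n => y (n + 1)
  map_add' _ _ := rfl
  map_smul' _ _ := rfl

lemma shiftL_pow (k : ℕ) (y : ℕ → ℚ) (m : ℕ) : ((shiftL ^ k) y) m = y (m + k) := by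
  induction k generalizing y m with
  | zero => rfl
  | succ k ih =>
    rw [pow_succ', Module.End.mul_apply]
    show ((shiftL ^ k) y) (m + 1) = _
    rw [ih]
    congr 1
    omega

lemma aeval_shift_apply (P : Polynomial ℚ) (y : ℕ → ℚ) (m : ℕ) :
    (Polynomial.aeval shiftL P) y m
      = ∑ j ∈ range (P.natDegree + 1), P.coeff j * y (j + m) := by
  rw [Polynomial.aeval_eq_sum_range]
  rw [LinearMap.coe_sum, Finset.sum_apply, Finset.sum_apply]
  refine Finset.sum_congr rfl fun j _ => ?_
  rw [LinearMap.smul_apply, Pi.smul_apply, shiftL_pow, smul_eq_mul, add_comm m j]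

/-- Extension of the finite sequence `x₀, …, x_N` to an infinite rational sequence
using the recurrence given by `P`. -/
noncomputable def yext (N : ℕ) (x : ℕ → ℤ) (P : Polynomial ℤ) : ℕ → ℚ
  | n =>
    if n ≤ N then (x n : ℚ)
    else if hd : P.natDegree ≤ N then
      -((P.coeff P.natDegree : ℚ))⁻¹ *
        ∑ j ∈ (Finset.range P.natDegree).attach,
          (P.coeff j.1 : ℚ) * yext N x P (j.1 + (n - P.natDegree))
    else 0
  termination_by n => n
  decreasing_by
    have := Finset.mem_range.mp j.2
    omega

lemma yext_eq (N : ℕ) (x : ℕ → ℤ) (P : Polynomial ℤ) {n : ℕ} (hn : n ≤ N) :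
    yext N x P n = (x n : ℚ) := by
  rw [yext, if_pos hn]

lemma yext_rec (N : ℕ) (x : ℕ → ℤ) (P : Polynomial ℤ) {n : ℕ} (hn : ¬ n ≤ N)
    (hd : P.natDegree ≤ N) :
    yext N x P n = -((P.coeff P.natDegree : ℚ))⁻¹ *
        ∑ j ∈ Finset.range P.natDegree,
          (P.coeff j : ℚ) * yext N x P (j + (n - P.natDegree)) := by
  rw [yext, if_neg hn, dif_pos hd, Finset.sum_attach (Finset.range P.natDegree)
    (fun j => (P.coeff j : ℚ) * yext N x P (j + (n - P.natDegree)))]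


lemma aeval_yext_self (N : ℕ) (x : ℕ → ℤ) (P : Polynomial ℤ) (hP : P ≠ 0)
    (h : memLambda N x P) :
    (Polynomial.aeval shiftL (P.map (Int.castRingHom ℚ))) (yext N x P) = 0 := by
  have hdeg : (P.map (Int.castRingHom ℚ)).natDegree = P.natDegree :=
    Polynomial.natDegree_map_eq_of_injective (fun a b h => by simpa using h) P
  have ha : (P.coeff P.natDegree : ℚ) ≠ 0 := by
    exact_mod_cast Polynomial.leadingCoeff_ne_zero.mpr hP
  funext m
  rw [aeval_shift_apply]
  simp only [hdeg, Polynomial.coeff_map, eq_intCast, Pi.zero_apply]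
  by_cases hm : m + P.natDegree ≤ N
  · have : ∀ j ∈ range (P.natDegree + 1),
        (P.coeff j : ℚ) * yext N x P (j + m) = ((P.coeff j * x (j + m) : ℤ) : ℚ) := by
      intro j hj
      rw [yext_eq N x P (by have := Finset.mem_range.mp hj; omega)]
      push_cast; ring
    rw [Finset.sum_congr rfl this, ← Int.cast_sum, h.2 m hm, Int.cast_zero]
  · rw [Finset.sum_range_succ]
    have hn : ¬ (P.natDegree + m ≤ N) := by omega
    rw [yext_rec N x P hn h.1]
    have : P.natDegree + m - P.natDegree = m := by omega
    rw [this, neg_mul, mul_neg, ← mul_assoc, mul_inv_cancel₀ ha, one_mul, add_neg_cancel]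

lemma prop_zero (d K : ℕ) (c : ℕ → ℚ) (w : ℕ → ℚ) (hc : c d ≠ 0) (hdK : d ≤ K)
    (hrec : ∀ m, ∑ j ∈ range (d + 1), c j * w (j + m) = 0)
    (hinit : ∀ m, m ≤ K → w m = 0) : ∀ m, w m = 0 := by
  intro m
  induction m using Nat.strong_induction_on with
  | _ m ih =>
    by_cases hm : m ≤ K
    · exact hinit m hm
    · have hrec' := hrec (m - d)
      rw [Finset.sum_range_succ] at hrec'
      have h1 : ∀ j ∈ range d, c j * w (j + (m - d)) = 0 := by
        intro j hj
        have hj' := Finset.mem_range.mp hj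
        rw [ih (j + (m - d)) (by omega), mul_zero]
      rw [Finset.sum_congr rfl h1, Finset.sum_const_zero, zero_add,
        show d + (m - d) = m by omega] at hrec'
      exact (mul_eq_zero.mp hrec').resolve_left hc

lemma Gq_mem_span (P₁ P₂ G : Polynomial ℤ) (hP₁ : P₁ ≠ 0) (hP₂ : P₂ ≠ 0)
    (hG₁ : G ∣ P₁) (hG₂ : G ∣ P₂)
    (hGgcd : ∀ D : Polynomial ℤ, D ∣ P₁ → D ∣ P₂ → D ∣ G) :
    G.map (Int.castRingHom ℚ) ∈ Ideal.span
      ({P₁.map (Int.castRingHom ℚ), P₂.map (Int.castRingHom ℚ)} : Set (Polynomial ℚ)) := by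
  classical
  set Q₁ := P₁.map (Int.castRingHom ℚ) with hQ₁
  set Q₂ := P₂.map (Int.castRingHom ℚ) with hQ₂
  set g := EuclideanDomain.gcd Q₁ Q₂ with hg
  have hmapinj : Function.Injective (Polynomial.map (Int.castRingHom ℚ)) :=
    Polynomial.map_injective _ (fun a b h => by simpa using h)
  have hQ₁0 : Q₁ ≠ 0 := fun h => hP₁ (hmapinj (by simpa using h))
  have hg0 : g ≠ 0 := fun h => hQ₁0 (EuclideanDomain.gcd_eq_zero_iff.mp h).1
  have halg : algebraMap ℤ ℚ = Int.castRingHom ℚ := rfl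
  -- integer normalization of g
  obtain ⟨b, hb⟩ := IsLocalization.integerNormalization_map_to_map (nonZeroDivisors ℤ) g
  set g' : Polynomial ℤ := IsLocalization.integerNormalization (nonZeroDivisors ℤ) g with hg'
  have hb0 : (b : ℤ) ≠ 0 := nonZeroDivisors.coe_ne_zero b
  have hbC : IsUnit (Polynomial.C ((b : ℤ) : ℚ)) :=
    Polynomial.isUnit_C.mpr (isUnit_iff_ne_zero.mpr (by exact_mod_cast hb0))
  have hbsmul : g'.map (algebraMap ℤ ℚ) = Polynomial.C ((b : ℤ) : ℚ) * g := by
    rw [hb, Algebra.smul_def, Polynomial.algebraMap_apply]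
    rfl
  have hg'0 : g' ≠ 0 := by
    intro h0
    apply hg0
    have h1 : Polynomial.C ((b : ℤ) : ℚ) * g = 0 := by
      rw [← hbsmul, h0, Polynomial.map_zero]
    have hbC0 : Polynomial.C ((b : ℤ) : ℚ) ≠ 0 := by
      simp only [Ne, Polynomial.C_eq_zero]
      exact_mod_cast hb0
    exact (mul_eq_zero.mp h1).resolve_left hbC0
  set h := g'.primPart with hh
  have hhprim : h.IsPrimitive := Polynomial.isPrimitive_primPart g'
  have hcontentC : IsUnit (Polynomial.C ((g'.content : ℤ) : ℚ)) := by
    refine Polynomial.isUnit_C.mpr (isUnit_iff_ne_zero.mpr ?_)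
    exact_mod_cast fun hc => hg'0 (Polynomial.content_eq_zero_iff.mp (by exact_mod_cast hc))
  have hmap_h : Polynomial.C ((g'.content : ℤ) : ℚ) * h.map (algebraMap ℤ ℚ)
      = Polynomial.C ((b : ℤ) : ℚ) * g := by
    rw [← hbsmul]
    conv_rhs => rw [g'.eq_C_content_mul_primPart]
    rw [Polynomial.map_mul, Polynomial.map_C]
    rfl
  -- `map h` and `g` divide each other
  have hhg : h.map (algebraMap ℤ ℚ) ∣ g := by
    rw [← hbC.dvd_mul_left, ← hmap_h]
    exact Dvd.intro_left _ rfl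
  have hgh : g ∣ h.map (algebraMap ℤ ℚ) := by
    rw [← hcontentC.dvd_mul_left, hmap_h]
    exact Dvd.intro_left _ rfl
  -- `h` divides `P₁` and `P₂` in `ℤ[X]` (Gauss)
  have hdvd : ∀ P : Polynomial ℤ, P ≠ 0 → g ∣ P.map (Int.castRingHom ℚ) → h ∣ P := by
    intro P hP0 hgP
    have hPprim : P.primPart.IsPrimitive := Polynomial.isPrimitive_primPart P
    have hPcontC : IsUnit (Polynomial.C ((P.content : ℤ) : ℚ)) := by
      refine Polynomial.isUnit_C.mpr (isUnit_iff_ne_zero.mpr ?_)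
      exact_mod_cast fun hc => hP0 (Polynomial.content_eq_zero_iff.mp (by exact_mod_cast hc))
    have h1 : h.map (algebraMap ℤ ℚ) ∣ P.primPart.map (algebraMap ℤ ℚ) := by
      rw [← hPcontC.dvd_mul_left]
      have : Polynomial.C ((P.content : ℤ) : ℚ) * P.primPart.map (algebraMap ℤ ℚ)
          = P.map (algebraMap ℤ ℚ) := by
        conv_rhs => rw [P.eq_C_content_mul_primPart]
        rw [Polynomial.map_mul, Polynomial.map_C]
        rfl
      rw [this, halg]
      exact dvd_trans hhg hgP
    have h2 : h ∣ P.primPart :=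
      hhprim.dvd_of_fraction_map_dvd_fraction_map h1
    exact dvd_trans h2 (P.primPart_dvd)
  have hh₁ : h ∣ P₁ := hdvd P₁ hP₁ (EuclideanDomain.gcd_dvd_left _ _)
  have hh₂ : h ∣ P₂ := hdvd P₂ hP₂ (EuclideanDomain.gcd_dvd_right _ _)
  have hhG : h ∣ G := hGgcd h hh₁ hh₂
  have hgG : g ∣ G.map (Int.castRingHom ℚ) :=
    dvd_trans hgh (by rw [← halg]; exact Polynomial.map_dvd _ hhG)
  have : G.map (Int.castRingHom ℚ) ∈ Ideal.span ({g} : Set (Polynomial ℚ)) :=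
    Ideal.mem_span_singleton.mpr hgG
  rwa [hg, EuclideanDomain.span_gcd] at this

/-- Konyagin. If `P₁, P₂ ∈ Λ(X)` for a finite integer sequence
`X = (x₀, …, x_N)` and `deg P₁ + deg P₂ ≤ N`, then `gcd(P₁, P₂) ∈ Λ(X)`
(for any `G ∈ ℤ[x]` which is a greatest common divisor of `P₁` and `P₂`). -/
theorem stmt2 (N : ℕ) (x : ℕ → ℤ) (P₁ P₂ : Polynomial ℤ) (hP₁ : P₁ ≠ 0) (hP₂ : P₂ ≠ 0)
    (h₁ : memLambda N x P₁) (h₂ : memLambda N x P₂)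
    (hdeg : P₁.natDegree + P₂.natDegree ≤ N)
    (G : Polynomial ℤ) (hG₁ : G ∣ P₁) (hG₂ : G ∣ P₂)
    (hGgcd : ∀ D : Polynomial ℤ, D ∣ P₁ → D ∣ P₂ → D ∣ G) :
    memLambda N x G := by
  classical
  have hd₁N : P₁.natDegree ≤ N := h₁.1
  have hd₂N : P₂.natDegree ≤ N := h₂.1
  set y := yext N x P₁ with hy
  set Q₁ := P₁.map (Int.castRingHom ℚ) with hQ₁
  set Q₂ := P₂.map (Int.castRingHom ℚ) with hQ₂
  have hmapdeg : ∀ P : Polynomial ℤ,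
      (P.map (Int.castRingHom ℚ)).natDegree = P.natDegree := fun P =>
    Polynomial.natDegree_map_eq_of_injective (fun a b h => by simpa using h) P
  have hA : (Polynomial.aeval shiftL Q₁) y = 0 := aeval_yext_self N x P₁ hP₁ h₁
  set w := (Polynomial.aeval shiftL Q₂) y with hwdef
  have hwrec0 : (Polynomial.aeval shiftL Q₁) w = 0 := by
    have hcomm : (Polynomial.aeval shiftL Q₁) ((Polynomial.aeval shiftL Q₂) y)
        = (Polynomial.aeval shiftL Q₂) ((Polynomial.aeval shiftL Q₁) y) := by
      rw [← Module.End.mul_apply, ← Module.End.mul_apply, ← map_mul, ← map_mul, mul_comm]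
    rw [hwdef, hcomm, hA, map_zero]
  have ha : ((P₁.coeff P₁.natDegree : ℚ)) ≠ 0 := by
    exact_mod_cast Polynomial.leadingCoeff_ne_zero.mpr hP₁
  have hwrec : ∀ m, ∑ j ∈ range (P₁.natDegree + 1), (P₁.coeff j : ℚ) * w (j + m) = 0 := by
    intro m
    have h0 := congrFun hwrec0 m
    rw [aeval_shift_apply, hQ₁] at h0
    simpa [hmapdeg P₁, Polynomial.coeff_map] using h0
  have hwinit : ∀ m, m ≤ N - P₂.natDegree → w m = 0 := by
    intro m hm
    rw [hwdef, aeval_shift_apply, hQ₂]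
    simp only [hmapdeg P₂, Polynomial.coeff_map, eq_intCast]
    have hc : ∀ j ∈ range (P₂.natDegree + 1),
        (P₂.coeff j : ℚ) * y (j + m) = ((P₂.coeff j * x (j + m) : ℤ) : ℚ) := by
      intro j hj
      have hj' := Finset.mem_range.mp hj
      rw [hy, yext_eq N x P₁ (show j + m ≤ N by omega)]
      push_cast; ring
    rw [Finset.sum_congr rfl hc, ← Int.cast_sum, h₂.2 m (by omega), Int.cast_zero]
  have hB : (Polynomial.aeval shiftL Q₂) y = 0 :=
    funext (prop_zero P₁.natDegree (N - P₂.natDegree) (fun j => (P₁.coeff j : ℚ)) w ha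
      (by omega) hwrec hwinit)
  obtain ⟨A, B, hAB⟩ := Ideal.mem_span_pair.mp (Gq_mem_span P₁ P₂ G hP₁ hP₂ hG₁ hG₂ hGgcd)
  have hGann : (Polynomial.aeval shiftL (G.map (Int.castRingHom ℚ))) y = 0 := by
    rw [← hAB, map_add, map_mul, map_mul, LinearMap.add_apply, Module.End.mul_apply,
      Module.End.mul_apply, hA, hB, map_zero, map_zero, add_zero]
  have hG0 : G ≠ 0 := fun h0 => hP₁ (by simpa [h0, zero_dvd_iff] using hG₁)
  have hGdegN : G.natDegree ≤ N := le_trans (Polynomial.natDegree_le_of_dvd hG₁ hP₁) hd₁N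
  refine ⟨hGdegN, ?_⟩
  intro j₀ hj₀
  have h0 := congrFun hGann j₀
  rw [aeval_shift_apply] at h0
  simp only [hmapdeg G, Polynomial.coeff_map, eq_intCast, Pi.zero_apply] at h0
  have hc : ∀ j ∈ range (G.natDegree + 1),
      (G.coeff j : ℚ) * y (j + j₀) = ((G.coeff j * x (j + j₀) : ℤ) : ℚ) := by
    intro j hj
    have hj' := Finset.mem_range.mp hj
    rw [hy, yext_eq N x P₁ (show j + j₀ ≤ N by omega)]
    push_cast; ring
  rw [Finset.sum_congr rfl hc, ← Int.cast_sum] at h0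
  exact_mod_cast h0
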